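/- For every permutation π of {1,...,n}, there is a bijection from partitions λ with at most n parts to partitions μ with at most n parts such that the pair (μ, π) is a standard labeled partition, and the bijection satisfies |λ| + maj(π) = |μ|. -/
import Mathlib

open Finset

def maj {n : ℕ} (π : Equiv.Perm (Fin n)) : ℕ :=
  ∑ i ∈ Finset.range n, if h : i + 1 < n then
    (if π ⟨i + 1, h⟩ < π ⟨i, Nat.lt_of_succ_lt h⟩ then i + 1 else 0) else 0

/-- A labeled partition `(μ, π)` is standard if `π i > π (i+1)` implies `μ i > μ (i+1)`. -/
def IsStandard {n : ℕ} (μ : Fin n → ℕ) (π : Equiv.Perm (Fin n)) : Prop :=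
  ∀ i : ℕ, ∀ h : i + 1 < n,
    π ⟨i + 1, h⟩ < π ⟨i, Nat.lt_of_succ_lt h⟩ → μ ⟨i + 1, h⟩ < μ ⟨i, Nat.lt_of_succ_lt h⟩

/-- descent indicator at position j -/
def desc {n : ℕ} (π : Equiv.Perm (Fin n)) (j : ℕ) : ℕ :=
  if h : j + 1 < n then
    (if π ⟨j + 1, h⟩ < π ⟨j, Nat.lt_of_succ_lt h⟩ then 1 else 0) else 0

/-- number of descents at positions ≥ k -/
def dsum {n : ℕ} (π : Equiv.Perm (Fin n)) (k : ℕ) : ℕ :=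
  ∑ j ∈ Finset.Ico k n, desc π j

lemma dsum_succ {n : ℕ} (π : Equiv.Perm (Fin n)) (k : ℕ) (hk : k < n) :
    dsum π k = desc π k + dsum π (k + 1) := by
  unfold dsum
  exact Finset.sum_eq_sum_Ico_succ_bot hk _

lemma dsum_le {n : ℕ} (π : Equiv.Perm (Fin n)) (g : Fin n → ℕ)
    (hg : Antitone g) (hs : IsStandard g π) :
    ∀ m : ℕ, ∀ i : Fin n, n ≤ i.val + m → dsum π i.val ≤ g i := by
  intro m
  induction m with
  | zero => intro i hi; exact absurd i.isLt (by omega)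
  | succ m ih =>
    intro i hi
    by_cases h : i.val + 1 < n
    · rw [dsum_succ π i.val (Nat.lt_of_succ_lt h)]
      have hih : dsum π (i.val + 1) ≤ g ⟨i.val + 1, h⟩ := ih ⟨i.val + 1, h⟩ (by simp; omega)
      have hii : (⟨i.val, i.isLt⟩ : Fin n) = i := rfl
      unfold desc
      rw [dif_pos h]
      split
      next hd =>
        have := hs i.val h hd
        have hle : g ⟨i.val + 1, h⟩ < g ⟨i.val, Nat.lt_of_succ_lt h⟩ := this
        simp only [Fin.eta] at hle ⊢
        omega
      next hd =>
        have hle : g ⟨i.val + 1, h⟩ ≤ g i := hg (by simp [Fin.le_def])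
        omega
    · have : Finset.Ico i.val n = {i.val} := by
        have := i.isLt
        ext x; simp [Finset.mem_Ico]; omega
      unfold dsum
      rw [this, Finset.sum_singleton]
      unfold desc
      rw [dif_neg h]
      exact Nat.zero_le _

lemma sum_dsum_eq_maj {n : ℕ} (π : Equiv.Perm (Fin n)) :
    ∑ i : Fin n, dsum π i.val = maj π := by
  rw [Fin.sum_univ_eq_sum_range (fun i => dsum π i)]
  unfold dsum
  have h1 : ∀ i ∈ Finset.range n, dsum π i
      = ∑ j ∈ Finset.range n, if i ≤ j then desc π j else 0 := by
    intro i hi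
    unfold dsum
    rw [Finset.sum_ite, Finset.sum_const_zero, add_zero]
    congr 1
    ext x; simp [Finset.mem_Ico, Finset.mem_filter, Finset.mem_range]; omega
  calc ∑ i ∈ Finset.range n, ∑ j ∈ Finset.Ico i n, desc π j
      = ∑ i ∈ Finset.range n, ∑ j ∈ Finset.range n, if i ≤ j then desc π j else 0 := by
        refine Finset.sum_congr rfl ?_
        intro i hi
        rw [← h1 i hi]; rfl
    _ = ∑ j ∈ Finset.range n, ∑ i ∈ Finset.range n, if i ≤ j then desc π j else 0 :=
        Finset.sum_comm
    _ = ∑ j ∈ Finset.range n, (j + 1) * desc π j := by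
        refine Finset.sum_congr rfl ?_
        intro j hj
        rw [Finset.sum_ite, Finset.sum_const_zero, add_zero, Finset.sum_const, smul_eq_mul]
        congr 1
        have hjn : j < n := Finset.mem_range.mp hj
        have : Finset.filter (fun i => i ≤ j) (Finset.range n) = Finset.range (j + 1) := by
          ext x; simp [Finset.mem_filter, Finset.mem_range]; omega
        rw [this, Finset.card_range]
    _ = maj π := by
        unfold maj desc
        refine Finset.sum_congr rfl ?_
        intro j hj
        by_cases h : j + 1 < n
        · rw [dif_pos h, dif_pos h]
          split <;> simp
        · rw [dif_neg h, dif_neg h, mul_zero]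

lemma antitone_of_adjacent {n : ℕ} (f : Fin n → ℕ)
    (h : ∀ i : ℕ, ∀ hi : i + 1 < n, f ⟨i + 1, hi⟩ ≤ f ⟨i, Nat.lt_of_succ_lt hi⟩) :
    Antitone f := by
  have key : ∀ d : ℕ, ∀ a b : Fin n, b.val = a.val + d → f b ≤ f a := by
    intro d
    induction d with
    | zero => intro a b hab; have : a = b := Fin.ext (by omega); rw [this]
    | succ d ih =>
      intro a b hab
      have hb := b.isLt
      have hlt : a.val + d + 1 < n := by omega
      have h1 : f b ≤ f ⟨a.val + d, Nat.lt_of_succ_lt hlt⟩ := by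
        have : b = ⟨a.val + d + 1, hlt⟩ := by
          apply Fin.ext; simp only [Fin.val_mk]; omega
        rw [this]
        exact h (a.val + d) hlt
      exact le_trans h1 (ih a ⟨a.val + d, Nat.lt_of_succ_lt hlt⟩ rfl)
  intro a b hab
  exact key (b.val - a.val) a b (by have := Fin.le_def.mp hab; omega)

/-- For every permutation `π ∈ S_n` there is a bijection `λ ↦ μ` from partitions with at
most `n` parts to partitions `μ` such that `(μ, π)` is standard, with `|λ| + maj π = |μ|`. -/
theorem exists_bijection_partitions_standard (n : ℕ) (π : Equiv.Perm (Fin n)) :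
    ∃ F : {f : Fin n → ℕ // Antitone f} ≃
        {g : Fin n → ℕ // Antitone g ∧ IsStandard g π},
      ∀ l : {f : Fin n → ℕ // Antitone f},
        (∑ i, l.1 i) + maj π = ∑ i, (F l).1 i := by
  -- forward map: μ i = λ i + dsum π i
  have dsum_antitone : ∀ i : ℕ, ∀ hi : i + 1 < n,
      dsum π (i + 1) ≤ dsum π i := by
    intro i hi
    rw [dsum_succ π i (Nat.lt_of_succ_lt hi)]
    omega
  refine ⟨{
    toFun := fun l => ⟨fun i => l.1 i + dsum π i.val, ?_, ?_⟩
    invFun := fun g => ⟨fun i => g.1 i - dsum π i.val, ?_⟩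
    left_inv := ?_
    right_inv := ?_ }, ?_⟩
  · -- antitone of forward
    apply antitone_of_adjacent
    intro i hi
    have h1 : l.1 ⟨i + 1, hi⟩ ≤ l.1 ⟨i, Nat.lt_of_succ_lt hi⟩ := l.2 (by simp [Fin.le_def])
    have h2 := dsum_antitone i hi
    simp only []
    omega
  · -- standard
    intro i hi hd
    have h1 : l.1 ⟨i + 1, hi⟩ ≤ l.1 ⟨i, Nat.lt_of_succ_lt hi⟩ := l.2 (by simp [Fin.le_def])
    have h2 : dsum π i = desc π i + dsum π (i + 1) := dsum_succ π i (Nat.lt_of_succ_lt hi)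
    have h3 : desc π i = 1 := by unfold desc; rw [dif_pos hi, if_pos hd]
    simp only []
    omega
  · -- antitone of inverse
    apply antitone_of_adjacent
    intro i hi
    obtain ⟨g, hg, hs⟩ := g
    have h1 : g ⟨i + 1, hi⟩ ≤ g ⟨i, Nat.lt_of_succ_lt hi⟩ := hg (by simp [Fin.le_def])
    have h2 : dsum π i = desc π i + dsum π (i + 1) := dsum_succ π i (Nat.lt_of_succ_lt hi)
    have h4 : dsum π i ≤ g ⟨i, Nat.lt_of_succ_lt hi⟩ :=
      dsum_le π g hg hs n ⟨i, Nat.lt_of_succ_lt hi⟩ (by simp)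
    simp only []
    by_cases hd : π ⟨i + 1, hi⟩ < π ⟨i, Nat.lt_of_succ_lt hi⟩
    · have h5 : g ⟨i + 1, hi⟩ < g ⟨i, Nat.lt_of_succ_lt hi⟩ := hs i hi hd
      have h3 : desc π i = 1 := by unfold desc; rw [dif_pos hi, if_pos hd]
      omega
    · have h3 : desc π i = 0 := by unfold desc; rw [dif_pos hi, if_neg hd]
      omega
  · -- left inverse
    intro l
    apply Subtype.ext
    funext i
    simp
  · -- right inverse
    intro g
    apply Subtype.ext
    funext i
    have h4 : dsum π i.val ≤ g.1 i := dsum_le π g.1 g.2.1 g.2.2 n i (by omega)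
    simp only []
    omega
  · -- sum identity
    intro l
    simp only [Equiv.coe_fn_mk]
    rw [Finset.sum_add_distrib, sum_dsum_eq_maj]
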